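/- arXiv:2311.10192 — 2 statements merged into one kernel-verified Lean document; each statement's English description precedes it below -/
import Mathlib

section
/- Let κ > 0 and let f : [0,∞) → ℝ be twice continuously differentiable with f(0) = f′(0) = 0, and suppose there exist constants A ≥ 0 and a < κ with |f(t)| ≤ A e^{a t}, |f′(t)| ≤ A e^{a t} and |f″(t)| ≤ A e^{a t} for all t ≥ 0. Then for every n ≥ 0, the n-th Laguerre coefficient of f″ satisfies ∫₀^∞ e^{−κ t} L_n(κ t) f″(t) dt = κ² Σ_{m=0}^{n} (n − m + 1) f_m, where f_m = ∫₀^∞ e^{−κ t} L_m(κ t) f(t) dt. -/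
open Real MeasureTheory Filter

/-- The Laguerre polynomial `L_n(t) = Σ_{k=0}^n (n choose k) (−t)^k / k!`. -/
noncomputable def laguerre (n : ℕ) (t : ℝ) : ℝ :=
  ∑ k ∈ Finset.range (n + 1), (n.choose k : ℝ) * (-t) ^ k / (Nat.factorial k : ℝ)

lemma hockey (k n : ℕ) : ∑ m ∈ Finset.Ico k n, m.choose k = n.choose (k + 1) := by
  cases n with
  | zero => simp
  | succ n => rw [Finset.Ico_add_one_right_eq_Icc, Nat.sum_Icc_choose]

lemma sum_laguerre_eq (n : ℕ) (t : ℝ) :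
    ∑ m ∈ Finset.range n, laguerre m t
      = ∑ k ∈ Finset.range n, (n.choose (k + 1) : ℝ) * (-t) ^ k / (Nat.factorial k : ℝ) := by
  unfold laguerre
  rw [Finset.sum_comm' (t' := Finset.range n) (s' := fun k => Finset.Ico k n)
    (by intro m k; simp [Finset.mem_range, Finset.mem_Ico]; omega)]
  refine Finset.sum_congr rfl fun k _ => ?_
  rw [← Finset.sum_div, ← Finset.sum_mul, ← Nat.cast_sum, hockey]

lemma laguerre_hasDerivAt (n : ℕ) (t : ℝ) :
    HasDerivAt (laguerre n) (-∑ m ∈ Finset.range n, laguerre m t) t := by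
  have h : HasDerivAt (laguerre n)
      (∑ k ∈ Finset.range (n + 1),
        (n.choose k : ℝ) * ((k : ℝ) * (-t) ^ (k - 1) * (-1)) / (Nat.factorial k : ℝ)) t := by
    unfold laguerre
    apply HasDerivAt.fun_sum
    intro k _
    exact (((hasDerivAt_pow k (-t)).comp t (hasDerivAt_neg t)).const_mul _).div_const _
  convert h using 1
  rw [Finset.sum_range_succ' _ n, sum_laguerre_eq]
  simp only [Nat.cast_zero, zero_mul, mul_zero, zero_div, add_zero, mul_assoc]
  rw [← Finset.sum_neg_distrib]
  refine Finset.sum_congr rfl fun k _ => ?_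
  have hk : ((k + 1 : ℕ).factorial : ℝ) = (k + 1 : ℝ) * (k.factorial : ℝ) := by
    rw [Nat.factorial_succ]; push_cast; ring
  have h0 : ((k : ℕ).factorial : ℝ) ≠ 0 := by positivity
  rw [hk]
  push_cast
  field_simp

lemma continuous_laguerre (n : ℕ) : Continuous (laguerre n) := by
  unfold laguerre; fun_prop

lemma lagk_hasDerivAt (κ : ℝ) (n : ℕ) (t : ℝ) :
    HasDerivAt (fun t => Real.exp (-κ * t) * laguerre n (κ * t))
      (-κ * (Real.exp (-κ * t) * ∑ m ∈ Finset.range (n + 1), laguerre m (κ * t))) t := by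
  have he : HasDerivAt (fun t : ℝ => Real.exp (-κ * t)) (-κ * Real.exp (-κ * t)) t := by
    simpa [mul_comm] using ((hasDerivAt_id t).const_mul (-κ)).exp
  have hl : HasDerivAt (fun t : ℝ => laguerre n (κ * t))
      ((-∑ m ∈ Finset.range n, laguerre m (κ * t)) * κ) t := by
    simpa [Function.comp_def] using (laguerre_hasDerivAt n (κ * t)).comp t ((hasDerivAt_id t).const_mul κ)
  have := he.fun_mul hl
  refine this.congr_deriv (Eq.symm ?_)
  rw [Finset.sum_range_succ]
  ring

lemma double_sum (n : ℕ) (g : ℕ → ℝ) :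
    ∑ m ∈ Finset.range (n + 1), ∑ j ∈ Finset.range (m + 1), g j
      = ∑ j ∈ Finset.range (n + 1), ((n + 1 - j : ℕ) : ℝ) * g j := by
  rw [Finset.sum_comm' (t' := Finset.range (n + 1)) (s' := fun j => Finset.Ico j (n + 1))
    (by intro m j; simp [Finset.mem_range, Finset.mem_Ico]; omega)]
  refine Finset.sum_congr rfl fun j _ => ?_
  rw [Finset.sum_const, Nat.card_Ico, nsmul_eq_mul]

lemma sumlag_hasDerivAt (κ : ℝ) (n : ℕ) (t : ℝ) :
    HasDerivAt (fun t => Real.exp (-κ * t) * ∑ m ∈ Finset.range (n + 1), laguerre m (κ * t))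
      (-κ * (Real.exp (-κ * t) *
        ∑ j ∈ Finset.range (n + 1), ((n + 1 - j : ℕ) : ℝ) * laguerre j (κ * t))) t := by
  have key : (fun t => Real.exp (-κ * t) * ∑ m ∈ Finset.range (n + 1), laguerre m (κ * t))
      = fun t => ∑ m ∈ Finset.range (n + 1), Real.exp (-κ * t) * laguerre m (κ * t) := by
    funext t; rw [Finset.mul_sum]
  rw [key]
  have := HasDerivAt.fun_sum (fun m (_ : m ∈ Finset.range (n + 1)) => lagk_hasDerivAt κ m t)
  refine this.congr_deriv (Eq.symm ?_)
  rw [← double_sum n (fun j => laguerre j (κ * t))]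
  simp only [Finset.mul_sum]

def SubExp (Q : ℝ → ℝ) : Prop :=
  ∀ ε : ℝ, 0 < ε → ∃ C : ℝ, 0 ≤ C ∧ ∀ s : ℝ, 0 ≤ s → |Q s| ≤ C * Real.exp (ε * s)

lemma subExp_laguerre (n : ℕ) : SubExp (laguerre n) := by
  intro ε hε
  refine ⟨∑ k ∈ Finset.range (n + 1), (n.choose k : ℝ) / ε ^ k, by positivity, fun s hs => ?_⟩
  unfold laguerre
  calc |∑ k ∈ Finset.range (n + 1), (n.choose k : ℝ) * (-s) ^ k / (Nat.factorial k : ℝ)|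
      ≤ ∑ k ∈ Finset.range (n + 1), |(n.choose k : ℝ) * (-s) ^ k / (Nat.factorial k : ℝ)| :=
        Finset.abs_sum_le_sum_abs _ _
    _ ≤ ∑ k ∈ Finset.range (n + 1), (n.choose k : ℝ) / ε ^ k * Real.exp (ε * s) := by
        refine Finset.sum_le_sum fun k _ => ?_
        have h1 : |(n.choose k : ℝ) * (-s) ^ k / (Nat.factorial k : ℝ)|
            = (n.choose k : ℝ) * (s ^ k / (Nat.factorial k : ℝ)) := by
          rw [abs_div, abs_mul, abs_pow, abs_neg, abs_of_nonneg hs, mul_div_assoc,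
            Nat.abs_cast, Nat.abs_cast]
        rw [h1]
        have h2 : s ^ k / (Nat.factorial k : ℝ) ≤ Real.exp (ε * s) / ε ^ k := by
          rw [div_le_div_iff₀ (by positivity) (by positivity)]
          calc s ^ k * ε ^ k = (ε * s) ^ k := by rw [mul_pow]; ring
            _ ≤ Real.exp (ε * s) * (Nat.factorial k : ℝ) := by
              have := Real.pow_div_factorial_le_exp (x := ε * s) (by positivity) k
              rw [div_le_iff₀ (by positivity)] at this
              linarith
        calc (n.choose k : ℝ) * (s ^ k / (Nat.factorial k : ℝ))
            ≤ (n.choose k : ℝ) * (Real.exp (ε * s) / ε ^ k) := by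
              exact mul_le_mul_of_nonneg_left h2 (by positivity)
          _ = (n.choose k : ℝ) / ε ^ k * Real.exp (ε * s) := by ring
    _ = (∑ k ∈ Finset.range (n + 1), (n.choose k : ℝ) / ε ^ k) * Real.exp (ε * s) := by
        rw [Finset.sum_mul]

lemma subExp_sum {ι : Type*} (s : Finset ι) (Q : ι → ℝ → ℝ) (h : ∀ i ∈ s, SubExp (Q i)) :
    SubExp (fun x => ∑ i ∈ s, Q i x) := by
  intro ε hε
  choose C hC0 hC using fun i (hi : i ∈ s) => h i hi ε hε
  refine ⟨∑ i ∈ s.attach, C i i.2, Finset.sum_nonneg fun i _ => hC0 i i.2, fun x hx => ?_⟩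
  calc |∑ i ∈ s, Q i x| = |∑ i ∈ s.attach, Q i x| := by rw [Finset.sum_attach s fun i => Q i x]
    _ ≤ ∑ i ∈ s.attach, |Q i x| := Finset.abs_sum_le_sum_abs _ _
    _ ≤ ∑ i ∈ s.attach, C i i.2 * Real.exp (ε * x) :=
        Finset.sum_le_sum fun i _ => hC i i.2 x hx
    _ = (∑ i ∈ s.attach, C i i.2) * Real.exp (ε * x) := by rw [Finset.sum_mul]

lemma subExp_const_mul (c : ℝ) (Q : ℝ → ℝ) (h : SubExp Q) : SubExp (fun x => c * Q x) := by
  intro ε hε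
  obtain ⟨C, hC0, hC⟩ := h ε hε
  refine ⟨|c| * C, by positivity, fun x hx => ?_⟩
  rw [abs_mul, mul_assoc]
  exact mul_le_mul_of_nonneg_left (hC x hx) (abs_nonneg c)

lemma master_bound (κ a A : ℝ) (hκ : 0 < κ) (ha : a < κ) (hA : 0 ≤ A)
    (Q : ℝ → ℝ) (hQ : SubExp Q) (φ : ℝ → ℝ)
    (hb : ∀ t : ℝ, 0 ≤ t → |φ t| ≤ A * Real.exp (a * t)) :
    ∃ C : ℝ, 0 ≤ C ∧ ∀ t : ℝ, 0 ≤ t →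
      |Real.exp (-κ * t) * Q (κ * t) * φ t| ≤ C * Real.exp (-((κ - a) / 2) * t) := by
  have hε : (0 : ℝ) < (κ - a) / (2 * κ) := div_pos (by linarith) (by positivity)
  obtain ⟨C, hC0, hC⟩ := hQ _ hε
  refine ⟨C * A, by positivity, fun t ht => ?_⟩
  have hQt : |Q (κ * t)| ≤ C * Real.exp ((κ - a) / 2 * t) := by
    have := hC (κ * t) (by positivity)
    rwa [show (κ - a) / (2 * κ) * (κ * t) = (κ - a) / 2 * t by field_simp] at this
  calc |Real.exp (-κ * t) * Q (κ * t) * φ t|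
      = Real.exp (-κ * t) * |Q (κ * t)| * |φ t| := by
        rw [abs_mul, abs_mul, abs_of_pos (Real.exp_pos _)]
    _ ≤ Real.exp (-κ * t) * (C * Real.exp ((κ - a) / 2 * t)) * (A * Real.exp (a * t)) := by
        have h1 := hb t ht
        have h2 : (0:ℝ) ≤ |φ t| := abs_nonneg _
        gcongr
    _ = C * A * Real.exp (-((κ - a) / 2) * t) := by
        rw [show -((κ - a) / 2) * t = -κ * t + ((κ - a) / 2 * t + a * t) by ring,
          Real.exp_add, Real.exp_add]
        ring

lemma tendsto_of_bound (F : ℝ → ℝ) (C δ : ℝ) (hδ : 0 < δ)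
    (h : ∀ t : ℝ, 0 ≤ t → |F t| ≤ C * Real.exp (-δ * t)) :
    Tendsto F atTop (nhds 0) := by
  have h1 : Tendsto (fun t : ℝ => C * Real.exp (-δ * t)) atTop (nhds 0) := by
    have h3 : Tendsto (fun t : ℝ => -δ * t) atTop atBot :=
      tendsto_id.const_mul_atTop_of_neg (by linarith)
    have h2 : Tendsto (fun t : ℝ => Real.exp (-δ * t)) atTop (nhds 0) :=
      Real.tendsto_exp_atBot.comp h3
    simpa using h2.const_mul C
  apply squeeze_zero_norm' _ h1
  filter_upwards [eventually_ge_atTop (0 : ℝ)] with t ht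
  simpa using h t ht

lemma master_tendsto (κ a A : ℝ) (hκ : 0 < κ) (ha : a < κ) (hA : 0 ≤ A)
    (Q : ℝ → ℝ) (hQ : SubExp Q) (φ : ℝ → ℝ)
    (hb : ∀ t : ℝ, 0 ≤ t → |φ t| ≤ A * Real.exp (a * t)) :
    Tendsto (fun t => Real.exp (-κ * t) * Q (κ * t) * φ t) atTop (nhds 0) := by
  obtain ⟨C, hC0, hC⟩ := master_bound κ a A hκ ha hA Q hQ φ hb
  exact tendsto_of_bound _ C _ (by linarith) hC

lemma master_integrable (κ a A : ℝ) (hκ : 0 < κ) (ha : a < κ) (hA : 0 ≤ A)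
    (Q : ℝ → ℝ) (hQc : Continuous Q) (hQ : SubExp Q) (φ : ℝ → ℝ) (hφ : Continuous φ)
    (hb : ∀ t : ℝ, 0 ≤ t → |φ t| ≤ A * Real.exp (a * t)) :
    IntegrableOn (fun t => Real.exp (-κ * t) * Q (κ * t) * φ t) (Set.Ioi (0:ℝ)) := by
  obtain ⟨C, hC0, hC⟩ := master_bound κ a A hκ ha hA Q hQ φ hb
  apply Integrable.mono' ((exp_neg_integrableOn_Ioi 0 (show (0:ℝ) < (κ-a)/2 by linarith)).const_mul C)
  · exact (((Real.continuous_exp.comp (continuous_const.mul continuous_id)).mul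
      (hQc.comp (continuous_const.mul continuous_id))).mul hφ).aestronglyMeasurable.restrict
  · filter_upwards [ae_restrict_mem measurableSet_Ioi] with t ht
    rw [Real.norm_eq_abs]
    exact hC t ht.le

/-- For `κ > 0` and `f` twice continuously differentiable with
`f(0) = f′(0) = 0`, and `|f|, |f′|, |f″| ≤ A e^{a t}` on `[0,∞)` for some `A ≥ 0`, `a < κ`,
the `n`-th Laguerre coefficient of `f″` equals `κ² Σ_{m=0}^n (n − m + 1) f_m`. -/
theorem stmt_3 (κ : ℝ) (hκ : 0 < κ) (f : ℝ → ℝ)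
    (hf : ContDiff ℝ 2 f) (hf0 : f 0 = 0) (hf'0 : deriv f 0 = 0)
    (A a : ℝ) (hA : 0 ≤ A) (ha : a < κ)
    (hfb : ∀ t : ℝ, 0 ≤ t → |f t| ≤ A * Real.exp (a * t))
    (hfb' : ∀ t : ℝ, 0 ≤ t → |deriv f t| ≤ A * Real.exp (a * t))
    (hfb'' : ∀ t : ℝ, 0 ≤ t → |deriv (deriv f) t| ≤ A * Real.exp (a * t))
    (n : ℕ) :
    ∫ t in Set.Ioi (0 : ℝ), Real.exp (-κ * t) * laguerre n (κ * t) * deriv (deriv f) t =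
      κ ^ 2 * ∑ m ∈ Finset.range (n + 1), ((n - m : ℕ) + 1 : ℝ) *
        ∫ t in Set.Ioi (0 : ℝ), Real.exp (-κ * t) * laguerre m (κ * t) * f t := by
  -- regularity facts
  have h2 : ContDiff ℝ 1 (deriv f) :=
    (contDiff_succ_iff_deriv.mp (show ContDiff ℝ (1 + 1) f by norm_num; exact hf)).2.2
  have hdf : Differentiable ℝ f := hf.differentiable (by norm_num)
  have hcf : Continuous f := hf.continuous
  have hcf' : Continuous (deriv f) := hf.continuous_deriv (by norm_num)
  have hdf' : Differentiable ℝ (deriv f) := h2.differentiable (by norm_num)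
  have hcf'' : Continuous (deriv (deriv f)) := h2.continuous_deriv le_rfl
  -- the auxiliary "polynomial" factors
  set Q2 : ℝ → ℝ := fun s => ∑ m ∈ Finset.range (n + 1), laguerre m s with hQ2def
  set Q3 : ℝ → ℝ := fun s => ∑ j ∈ Finset.range (n + 1), ((n + 1 - j : ℕ) : ℝ) * laguerre j s
    with hQ3def
  have hQ2 : SubExp Q2 := subExp_sum _ _ fun m _ => subExp_laguerre m
  have hQ3 : SubExp Q3 := subExp_sum _ _ fun j _ => subExp_const_mul _ _ (subExp_laguerre j)
  have hQ2c : Continuous Q2 := continuous_finset_sum _ fun m _ => continuous_laguerre m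
  have hQ3c : Continuous Q3 :=
    continuous_finset_sum _ fun j _ => continuous_const.mul (continuous_laguerre j)
  -- integrability
  have int_f : ∀ m : ℕ,
      IntegrableOn (fun t => Real.exp (-κ * t) * laguerre m (κ * t) * f t) (Set.Ioi (0:ℝ)) :=
    fun m => master_integrable κ a A hκ ha hA _ (continuous_laguerre m) (subExp_laguerre m)
      f hcf hfb
  have int_f'' : IntegrableOn
      (fun t => Real.exp (-κ * t) * laguerre n (κ * t) * deriv (deriv f) t) (Set.Ioi (0:ℝ)) :=
    master_integrable κ a A hκ ha hA _ (continuous_laguerre n) (subExp_laguerre n)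
      _ hcf'' hfb''
  have int_2f' : IntegrableOn
      (fun t => Real.exp (-κ * t) * Q2 (κ * t) * deriv f t) (Set.Ioi (0:ℝ)) :=
    master_integrable κ a A hκ ha hA _ hQ2c hQ2 _ hcf' hfb'
  have int_3f : IntegrableOn
      (fun t => Real.exp (-κ * t) * Q3 (κ * t) * f t) (Set.Ioi (0:ℝ)) :=
    master_integrable κ a A hκ ha hA _ hQ3c hQ3 _ hcf hfb
  -- first integration by parts
  have hcont1 : ContinuousWithinAt
      (fun t => Real.exp (-κ * t) * laguerre n (κ * t) * deriv f t) (Set.Ici 0) 0 :=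
    (((Real.continuous_exp.comp (continuous_const.mul continuous_id)).mul
      ((continuous_laguerre n).comp (continuous_const.mul continuous_id))).mul
      hcf').continuousWithinAt
  have hderiv1 : ∀ x ∈ Set.Ioi (0:ℝ), HasDerivAt
      (fun t => Real.exp (-κ * t) * laguerre n (κ * t) * deriv f t)
      (-κ * (Real.exp (-κ * x) * Q2 (κ * x) * deriv f x)
        + Real.exp (-κ * x) * laguerre n (κ * x) * deriv (deriv f) x) x := by
    intro x _
    have h := (lagk_hasDerivAt κ n x).fun_mul ((hdf' x).hasDerivAt)
    refine h.congr_deriv (Eq.symm ?_)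
    simp only [hQ2def]
    ring
  have htend1 : Tendsto (fun t => Real.exp (-κ * t) * laguerre n (κ * t) * deriv f t)
      atTop (nhds 0) := master_tendsto κ a A hκ ha hA _ (subExp_laguerre n) _ hfb'
  have ibp1 := integral_Ioi_of_hasDerivAt_of_tendsto hcont1 hderiv1
    ((int_2f'.const_mul (-κ)).add int_f'') htend1
  simp only [mul_zero, hf'0, sub_zero] at ibp1
  -- second integration by parts
  have hcont2 : ContinuousWithinAt
      (fun t => Real.exp (-κ * t) * Q2 (κ * t) * f t) (Set.Ici 0) 0 :=
    (((Real.continuous_exp.comp (continuous_const.mul continuous_id)).mul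
      (hQ2c.comp (continuous_const.mul continuous_id))).mul hcf).continuousWithinAt
  have hderiv2 : ∀ x ∈ Set.Ioi (0:ℝ), HasDerivAt
      (fun t => Real.exp (-κ * t) * Q2 (κ * t) * f t)
      (-κ * (Real.exp (-κ * x) * Q3 (κ * x) * f x)
        + Real.exp (-κ * x) * Q2 (κ * x) * deriv f x) x := by
    intro x _
    have h := (sumlag_hasDerivAt κ n x).fun_mul ((hdf x).hasDerivAt)
    refine h.congr_deriv (Eq.symm ?_)
    simp only [hQ2def, hQ3def]
    ring
  have htend2 : Tendsto (fun t => Real.exp (-κ * t) * Q2 (κ * t) * f t)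
      atTop (nhds 0) := master_tendsto κ a A hκ ha hA _ hQ2 _ hfb
  have ibp2 := integral_Ioi_of_hasDerivAt_of_tendsto hcont2 hderiv2
    ((int_3f.const_mul (-κ)).add int_2f') htend2
  simp only [mul_zero, hf0, sub_zero] at ibp2
  -- split the integrals
  rw [integral_add (int_2f'.const_mul (-κ)) int_f'', integral_const_mul] at ibp1
  rw [integral_add (int_3f.const_mul (-κ)) int_2f', integral_const_mul] at ibp2
  -- expand the Q3 integral as a sum
  have expand : ∫ t in Set.Ioi (0:ℝ), Real.exp (-κ * t) * Q3 (κ * t) * f t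
      = ∑ j ∈ Finset.range (n + 1), ((n - j : ℕ) + 1 : ℝ) *
          ∫ t in Set.Ioi (0:ℝ), Real.exp (-κ * t) * laguerre j (κ * t) * f t := by
    have e1 : (fun t => Real.exp (-κ * t) * Q3 (κ * t) * f t)
        = fun t => ∑ j ∈ Finset.range (n + 1), ((n + 1 - j : ℕ) : ℝ) *
            (Real.exp (-κ * t) * laguerre j (κ * t) * f t) := by
      funext t
      simp only [hQ3def]
      rw [Finset.mul_sum, Finset.sum_mul]
      exact Finset.sum_congr rfl fun j _ => by ring
    rw [e1, integral_finset_sum _ fun j _ => (int_f j).const_mul _]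
    refine Finset.sum_congr rfl fun j hj => ?_
    rw [integral_const_mul]
    congr 1
    have hj' : (n + 1 - j : ℕ) = (n - j) + 1 := by
      have := Finset.mem_range.mp hj; omega
    rw [hj']
    push_cast
    ring
  rw [expand] at ibp2
  have e1 : (∫ t in Set.Ioi (0:ℝ), Real.exp (-κ * t) * laguerre n (κ * t) * deriv (deriv f) t)
      = κ * ∫ t in Set.Ioi (0:ℝ), Real.exp (-κ * t) * Q2 (κ * t) * deriv f t := by
    linarith [ibp1]
  have e2 : (∫ t in Set.Ioi (0:ℝ), Real.exp (-κ * t) * Q2 (κ * t) * deriv f t)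
      = κ * ∑ j ∈ Finset.range (n + 1), ((n - j : ℕ) + 1 : ℝ) *
          ∫ t in Set.Ioi (0:ℝ), Real.exp (-κ * t) * laguerre j (κ * t) * f t := by
    linarith [ibp2]
  rw [e1, e2]
  ring
end

section
/- For every n ≥ 0, the function Φ_n is twice differentiable on (0,∞) and Φ_n″(r) = K₀(γr) v̄_n(r) + (K₁(γr)/r) w̄_n(r) for all r > 0, where v̄_n(r) = 2 Σ_{k=1}^{⌊n/2⌋} k(2k−1) a_{n,2k} r^{2k−2} − γ Σ_{k=0}^{⌊(n−1)/2⌋} (2k+1) a_{n,2k+1} r^{2k} − γ w̃_n(r) and w̄_n(r) = 4 Σ_{k=1}^{⌊(n−1)/2⌋} k² a_{n,2k+1} r^{2k} − 2γ Σ_{k=1}^{⌊n/2⌋} k a_{n,2k} r^{2k} − γ r ṽ_n(r) − w̃_n(r), with ṽ_n(r) = 2 Σ_{k=1}^{⌊n/2⌋} k a_{n,2k} r^{2k−1} − γ w_n(r) and w̃_n(r) = 2 Σ_{k=1}^{⌊(n−1)/2⌋} k a_{n,2k+1} r^{2k} − γ v_n(r). -/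
open Real Filter

/-- `I₀(z) = Σ_{n=0}^∞ (z/2)^{2n}/(n!)²`. -/
noncomputable def besselI0 (z : ℝ) : ℝ :=
  ∑' n : ℕ, (z / 2) ^ (2 * n) / (Nat.factorial n : ℝ) ^ 2

/-- `I₁(z) = Σ_{n=0}^∞ (z/2)^{2n+1}/(n!(n+1)!)`. -/
noncomputable def besselI1 (z : ℝ) : ℝ :=
  ∑' n : ℕ, (z / 2) ^ (2 * n + 1) / ((Nat.factorial n : ℝ) * (Nat.factorial (n + 1) : ℝ))

/-- `ψ(0) = 0`, `ψ(n) = Σ_{m=1}^n 1/m`. -/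
noncomputable def psiHarm (n : ℕ) : ℝ := ∑ m ∈ Finset.Icc 1 n, (1 / m : ℝ)

/-- `K₀(z) = −(ln(z/2) + C) I₀(z) + Σ_{n=1}^∞ (ψ(n)/(n!)²) (z/2)^{2n}`. -/
noncomputable def besselK0 (z : ℝ) : ℝ :=
  -(Real.log (z / 2) + Real.eulerMascheroniConstant) * besselI0 z +
    ∑' n : ℕ, psiHarm (n + 1) / (Nat.factorial (n + 1) : ℝ) ^ 2 * (z / 2) ^ (2 * (n + 1))

/-- `K₁(z) = 1/z + (ln(z/2) + C) I₁(z) − (1/2) Σ_{n=0}^∞ ((ψ(n+1)+ψ(n))/(n!(n+1)!)) (z/2)^{2n+1}`. -/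
noncomputable def besselK1 (z : ℝ) : ℝ :=
  1 / z + (Real.log (z / 2) + Real.eulerMascheroniConstant) * besselI1 z -
    (1 / 2) * ∑' n : ℕ, (psiHarm (n + 1) + psiHarm n) /
      ((Nat.factorial n : ℝ) * (Nat.factorial (n + 1) : ℝ)) * (z / 2) ^ (2 * n + 1)

/-- `β_n = κ²(n+1)/c²`. -/
noncomputable def betaC (κ c : ℝ) (n : ℕ) : ℝ := κ ^ 2 * (n + 1) / c ^ 2

/-- `γ = κ/c`. -/
noncomputable def gammaC (κ c : ℝ) : ℝ := κ / c

/-- `v_n(r) = Σ_{k=0}^{⌊n/2⌋} a_{n,2k} r^{2k}`. -/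
noncomputable def vPoly (a : ℕ → ℕ → ℝ) (n : ℕ) (r : ℝ) : ℝ :=
  ∑ k ∈ Finset.range (n / 2 + 1), a n (2 * k) * r ^ (2 * k)

/-- `w_n(r) = Σ_{k=0}^{⌊(n−1)/2⌋} a_{n,2k+1} r^{2k+1}` (so `w₀ = 0` since `a_{0,1} = 0`). -/
noncomputable def wPoly (a : ℕ → ℕ → ℝ) (n : ℕ) (r : ℝ) : ℝ :=
  ∑ k ∈ Finset.range ((n - 1) / 2 + 1), a n (2 * k + 1) * r ^ (2 * k + 1)

/-- `Φ_n(r) = K₀(γr) v_n(r) + K₁(γr) w_n(r)`. -/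
noncomputable def PhiFund (γ : ℝ) (a : ℕ → ℕ → ℝ) (n : ℕ) (r : ℝ) : ℝ :=
  besselK0 (γ * r) * vPoly a n r + besselK1 (γ * r) * wPoly a n r

/-- `ṽ_n(r) = 2 Σ_{k=1}^{⌊n/2⌋} k a_{n,2k} r^{2k−1} − γ w_n(r)`. -/
noncomputable def vTilde (γ : ℝ) (a : ℕ → ℕ → ℝ) (n : ℕ) (r : ℝ) : ℝ :=
  2 * ∑ k ∈ Finset.Icc 1 (n / 2), (k : ℝ) * a n (2 * k) * r ^ (2 * k - 1) - γ * wPoly a n r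

/-- `w̃_n(r) = 2 Σ_{k=1}^{⌊(n−1)/2⌋} k a_{n,2k+1} r^{2k} − γ v_n(r)`. -/
noncomputable def wTilde (γ : ℝ) (a : ℕ → ℕ → ℝ) (n : ℕ) (r : ℝ) : ℝ :=
  2 * ∑ k ∈ Finset.Icc 1 ((n - 1) / 2), (k : ℝ) * a n (2 * k + 1) * r ^ (2 * k) -
    γ * vPoly a n r

/-- `v̄_n(r) = 2 Σ_{k=1}^{⌊n/2⌋} k(2k−1) a_{n,2k} r^{2k−2}
  − γ Σ_{k=0}^{⌊(n−1)/2⌋} (2k+1) a_{n,2k+1} r^{2k} − γ w̃_n(r)`. -/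
noncomputable def vBar (γ : ℝ) (a : ℕ → ℕ → ℝ) (n : ℕ) (r : ℝ) : ℝ :=
  2 * ∑ k ∈ Finset.Icc 1 (n / 2), (k : ℝ) * (2 * k - 1 : ℝ) * a n (2 * k) * r ^ (2 * k - 2) -
    γ * ∑ k ∈ Finset.range ((n - 1) / 2 + 1), (2 * k + 1 : ℝ) * a n (2 * k + 1) * r ^ (2 * k) -
    γ * wTilde γ a n r

/-- `w̄_n(r) = 4 Σ_{k=1}^{⌊(n−1)/2⌋} k² a_{n,2k+1} r^{2k}
  − 2γ Σ_{k=1}^{⌊n/2⌋} k a_{n,2k} r^{2k} − γ r ṽ_n(r) − w̃_n(r)`. -/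
noncomputable def wBar (γ : ℝ) (a : ℕ → ℕ → ℝ) (n : ℕ) (r : ℝ) : ℝ :=
  4 * ∑ k ∈ Finset.Icc 1 ((n - 1) / 2), (k : ℝ) ^ 2 * a n (2 * k + 1) * r ^ (2 * k) -
    2 * γ * ∑ k ∈ Finset.Icc 1 (n / 2), (k : ℝ) * a n (2 * k) * r ^ (2 * k) -
    γ * r * vTilde γ a n r - wTilde γ a n r


section aux


lemma fact_one_le (n : ℕ) : (1 : ℝ) ≤ (n.factorial : ℝ) := by
  exact_mod_cast Nat.one_le_iff_ne_zero.2 n.factorial_pos.ne'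

lemma summable_poly_mul (p : ℕ) (x : ℝ) (hx : 0 ≤ x) :
    Summable (fun n : ℕ => (n + 1 : ℝ) ^ p * x ^ n / n.factorial) := by
  refine Summable.of_nonneg_of_le (fun n => by positivity) (fun n => ?_)
    (Real.summable_pow_div_factorial (2 ^ p * x))
  have h1 : (n + 1 : ℝ) ≤ 2 ^ n := by exact_mod_cast Nat.lt_two_pow_self
  have h2 : (n + 1 : ℝ) ^ p ≤ ((2:ℝ) ^ p) ^ n := by
    calc (n + 1 : ℝ) ^ p ≤ ((2:ℝ) ^ n) ^ p := by gcongr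
      _ = ((2:ℝ) ^ p) ^ n := by rw [← pow_mul, ← pow_mul, Nat.mul_comm]
  rw [mul_pow]
  gcongr

/-- generic: `hs` gives a summable bound on a large ball. -/
lemma hs_of_bound (c : ℕ → ℝ) (e : ℕ → ℕ)
    (hc : ∀ n, |c n| ≤ 2 * (n + 1) / n.factorial) (he : ∀ n, e n ≤ 2 * n + 2) :
    ∀ R : ℝ, 1 ≤ R → Summable (fun n => |c n| * ((e n : ℝ) + 1) * R ^ e n) := by
  intro R hR
  have hR0 : (0:ℝ) < R := lt_of_lt_of_le one_pos hR
  refine Summable.of_nonneg_of_le (fun n => by positivity) (fun n => ?_)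
    (((summable_poly_mul 2 (R ^ 2) (by positivity)).mul_left (6 * R ^ 2)))
  have h1 : R ^ e n ≤ R ^ (2 * n + 2) := pow_le_pow_right₀ hR (he n)
  have h2 : ((e n : ℝ) + 1) ≤ 2 * n + 3 := by
    have h := (Nat.cast_le (α := ℝ)).2 (he n); push_cast at h ⊢; linarith
  calc |c n| * ((e n : ℝ) + 1) * R ^ e n
      ≤ (2 * (n + 1) / n.factorial) * ((2:ℝ) * n + 3) * R ^ (2 * n + 2) := by
        gcongr <;> first | exact hc n | exact h2 | exact h1
    _ = (2 * (n + 1) / n.factorial) * ((2:ℝ) * n + 3) * (R ^ 2 * (R ^ 2) ^ n) := by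
        rw [show (2 * n + 2) = 2 + 2 * n by ring, pow_add, pow_mul]
    _ ≤ (2 * (n + 1) / n.factorial) * (3 * ((n:ℝ) + 1)) * (R ^ 2 * (R ^ 2) ^ n) := by
        gcongr
        linarith
    _ = 6 * R ^ 2 * ((n + 1 : ℝ) ^ 2 * (R ^ 2) ^ n / n.factorial) := by ring

section generic
variable (c : ℕ → ℝ) (e : ℕ → ℕ)

lemma summable_cz
    (hs : ∀ R : ℝ, 1 ≤ R → Summable (fun n => |c n| * ((e n : ℝ) + 1) * R ^ e n)) (z : ℝ) :
    Summable (fun n => c n * z ^ e n) := by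
  have hR : (1:ℝ) ≤ |z| + 1 := by linarith [abs_nonneg z]
  refine Summable.of_norm (Summable.of_nonneg_of_le (fun n => norm_nonneg _) (fun n => ?_)
    (hs (|z| + 1) hR))
  rw [norm_mul, norm_pow, Real.norm_eq_abs, Real.norm_eq_abs]
  calc |c n| * |z| ^ e n ≤ |c n| * (|z| + 1) ^ e n := by gcongr; linarith
    _ ≤ |c n| * (((e n : ℝ) + 1) * (|z| + 1) ^ e n) := by
        have h0 : (0:ℝ) ≤ (|z|+1) ^ e n := by positivity
        nlinarith [mul_nonneg (mul_nonneg (abs_nonneg (c n)) h0)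
          (by positivity : (0:ℝ) ≤ (e n : ℝ))]
    _ = |c n| * ((e n : ℝ) + 1) * (|z| + 1) ^ e n := by ring

lemma summable_cz_deriv
    (hs : ∀ R : ℝ, 1 ≤ R → Summable (fun n => |c n| * ((e n : ℝ) + 1) * R ^ e n)) (z : ℝ) :
    Summable (fun n => c n * (e n : ℝ) * z ^ (e n - 1)) := by
  have hR : (1:ℝ) ≤ |z| + 1 := by linarith [abs_nonneg z]
  refine Summable.of_norm (Summable.of_nonneg_of_le (fun n => norm_nonneg _) (fun n => ?_)
    (hs (|z| + 1) hR))
  rw [norm_mul, norm_mul, norm_pow, Real.norm_eq_abs, Real.norm_eq_abs, Real.norm_eq_abs]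
  have h1 : |z| ^ (e n - 1) ≤ (|z| + 1) ^ e n :=
    le_trans (by gcongr; linarith) (pow_le_pow_right₀ hR (Nat.sub_le _ _))
  have h2 : |(e n : ℝ)| ≤ (e n : ℝ) + 1 := by rw [abs_of_nonneg (by positivity)]; linarith
  calc |c n| * |(e n : ℝ)| * |z| ^ (e n - 1) ≤ |c n| * ((e n : ℝ) + 1) * (|z| + 1) ^ e n := by
        gcongr <;> first | exact abs_nonneg _ | exact h2 | exact h1

end generic
section generic2
set_option maxHeartbeats 1000000
variable (c : ℕ → ℝ) (e : ℕ → ℕ)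
lemma hasDerivAt_cz
    (hs : ∀ R : ℝ, 1 ≤ R → Summable (fun n => |c n| * ((e n : ℝ) + 1) * R ^ e n)) (z : ℝ) :
    HasDerivAt (fun z => ∑' n, c n * z ^ e n) (∑' n, c n * (e n : ℝ) * z ^ (e n - 1)) z := by
  set R := |z| + 1 with hRdef
  have hR : (1:ℝ) ≤ R := by rw [hRdef]; linarith [abs_nonneg z]
  have hzmem : z ∈ Set.Ioo (-R) R :=
    ⟨by rw [hRdef]; linarith [neg_abs_le z], by rw [hRdef]; linarith [le_abs_self z]⟩
  refine hasDerivAt_tsum_of_isPreconnected (g := fun n z => c n * z ^ e n)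
    (g' := fun n y => c n * (e n : ℝ) * y ^ (e n - 1)) (hs R hR) isOpen_Ioo
    (isPreconnected_Ioo) (fun n y _ => ?_) (fun n y hy => ?_) hzmem
    (summable_cz c e hs z) hzmem
  · have := (hasDerivAt_pow (e n) y).const_mul (c n)
    simpa [mul_assoc] using this
  · have hy' : |y| ≤ R := by
      rw [abs_le]; exact ⟨hy.1.le, hy.2.le⟩
    have h1 : |y| ^ (e n - 1) ≤ R ^ e n :=
      le_trans (pow_le_pow_left₀ (abs_nonneg y) hy' _) (pow_le_pow_right₀ hR (Nat.sub_le _ _))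
    have h2 : |(e n : ℝ)| ≤ (e n : ℝ) + 1 := by rw [abs_of_nonneg (by positivity)]; linarith
    simp only [Real.norm_eq_abs, abs_mul, abs_pow]
    calc |c n| * |(e n : ℝ)| * |y| ^ (e n - 1) ≤ |c n| * ((e n : ℝ) + 1) * R ^ e n := by
          gcongr <;> first | exact abs_nonneg _ | exact h2 | exact h1

end generic2



noncomputable def cI0 (n : ℕ) : ℝ := (1/2 : ℝ) ^ (2 * n) / (n.factorial : ℝ) ^ 2
def eI0 (n : ℕ) : ℕ := 2 * n
noncomputable def cI1 (n : ℕ) : ℝ :=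
  (1/2 : ℝ) ^ (2 * n + 1) / ((n.factorial : ℝ) * ((n+1).factorial : ℝ))
def eI1 (n : ℕ) : ℕ := 2 * n + 1
noncomputable def cS0 (n : ℕ) : ℝ :=
  psiHarm (n+1) * (1/2 : ℝ) ^ (2 * n + 2) / (((n+1).factorial : ℝ)) ^ 2
def eS0 (n : ℕ) : ℕ := 2 * n + 2
noncomputable def cS1 (n : ℕ) : ℝ :=
  (psiHarm (n+1) + psiHarm n) * (1/2 : ℝ) ^ (2 * n + 1) /
    ((n.factorial : ℝ) * ((n+1).factorial : ℝ))
def eS1 (n : ℕ) : ℕ := 2 * n + 1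

lemma psiHarm_nonneg (n : ℕ) : 0 ≤ psiHarm n := by
  unfold psiHarm; positivity

lemma psiHarm_le (n : ℕ) : psiHarm n ≤ n := by
  unfold psiHarm
  calc ∑ m ∈ Finset.Icc 1 n, (1 / m : ℝ) ≤ ∑ m ∈ Finset.Icc 1 n, 1 := by
        apply Finset.sum_le_sum
        intro m hm
        rw [Finset.mem_Icc] at hm
        have hm1 : (1:ℝ) ≤ (m:ℝ) := by exact_mod_cast hm.1
        rw [div_le_one (by linarith)]
        exact hm1
    _ = (n : ℝ) := by rw [Finset.sum_const, Nat.card_Icc]; simp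

lemma psiHarm_succ (n : ℕ) : psiHarm (n+1) = psiHarm n + 1 / (n+1) := by
  unfold psiHarm
  rw [Finset.sum_Icc_succ_top (by omega : 1 ≤ n + 1)]
  push_cast
  ring

lemma half_pow_le_one (k : ℕ) : (1/2 : ℝ) ^ k ≤ 1 :=
  pow_le_one₀ (by norm_num) (by norm_num)

lemma fact_le_fact_succ_sq (n : ℕ) : (n.factorial : ℝ) ≤ ((n+1).factorial : ℝ) ^ 2 := by
  have h1 : (n.factorial : ℝ) ≤ ((n+1).factorial : ℝ) := by
    exact_mod_cast Nat.factorial_le (n.le_succ)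
  nlinarith [fact_one_le (n+1), fact_one_le n]

lemma fact_le_mul (n : ℕ) : (n.factorial : ℝ) ≤ (n.factorial : ℝ) * ((n+1).factorial : ℝ) := by
  nlinarith [fact_one_le (n+1), fact_one_le n]

lemma hcI0 (n : ℕ) : |cI0 n| ≤ 2 * (n + 1) / n.factorial := by
  rw [cI0, abs_of_nonneg (by positivity)]
  have h1 : (n.factorial : ℝ) ≤ (n.factorial : ℝ) ^ 2 := by nlinarith [fact_one_le n]
  calc (1/2 : ℝ) ^ (2*n) / (n.factorial : ℝ) ^ 2 ≤ 1 / (n.factorial : ℝ) ^ 2 := by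
        gcongr
        exact half_pow_le_one _
    _ ≤ 1 / (n.factorial : ℝ) := by
        gcongr
    _ ≤ 2 * (n + 1) / n.factorial := by
        gcongr
        linarith [Nat.cast_nonneg (α := ℝ) n]

lemma hcI1 (n : ℕ) : |cI1 n| ≤ 2 * (n + 1) / n.factorial := by
  rw [cI1, abs_of_nonneg (by positivity)]
  calc (1/2 : ℝ) ^ (2*n+1) / ((n.factorial : ℝ) * ((n+1).factorial : ℝ))
      ≤ 1 / ((n.factorial : ℝ) * ((n+1).factorial : ℝ)) := by
        gcongr
        exact half_pow_le_one _
    _ ≤ 1 / (n.factorial : ℝ) := by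
        gcongr
        exact fact_le_mul n
    _ ≤ 2 * (n + 1) / n.factorial := by
        gcongr
        linarith [Nat.cast_nonneg (α := ℝ) n]

lemma hcS0 (n : ℕ) : |cS0 n| ≤ 2 * (n + 1) / n.factorial := by
  have hψ : 0 ≤ psiHarm (n+1) := psiHarm_nonneg _
  have hψ' : psiHarm (n+1) ≤ (n:ℝ) + 1 := by
    have := psiHarm_le (n+1); push_cast at this; linarith
  rw [cS0, abs_of_nonneg (by positivity)]
  calc psiHarm (n+1) * (1/2 : ℝ) ^ (2*n+2) / ((n+1).factorial : ℝ) ^ 2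
      ≤ (((n:ℝ)+1) * 1) / ((n+1).factorial : ℝ) ^ 2 := by
        gcongr
        exact half_pow_le_one _
    _ ≤ (((n:ℝ)+1) * 1) / (n.factorial : ℝ) := by
        gcongr
        exact fact_le_fact_succ_sq n
    _ ≤ 2 * (n + 1) / n.factorial := by
        rw [div_le_div_iff_of_pos_right (by positivity : (0:ℝ) < (n.factorial:ℝ))]
        nlinarith [Nat.cast_nonneg (α := ℝ) n]

lemma hcS1 (n : ℕ) : |cS1 n| ≤ 2 * (n + 1) / n.factorial := by
  have hψ : 0 ≤ psiHarm (n+1) := psiHarm_nonneg _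
  have hψ0 : 0 ≤ psiHarm n := psiHarm_nonneg _
  have h1 : psiHarm (n+1) ≤ (n:ℝ) + 1 := by
    have := psiHarm_le (n+1); push_cast at this; linarith
  have h2 : psiHarm n ≤ (n:ℝ) + 1 := by linarith [psiHarm_le n]
  rw [cS1, abs_of_nonneg (by positivity)]
  calc (psiHarm (n+1) + psiHarm n) * (1/2 : ℝ) ^ (2*n+1) /
        ((n.factorial : ℝ) * ((n+1).factorial : ℝ))
      ≤ (2 * ((n:ℝ)+1) * 1) / ((n.factorial : ℝ) * ((n+1).factorial : ℝ)) := by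
        gcongr
        · linarith
        · exact half_pow_le_one _
    _ ≤ (2 * ((n:ℝ)+1) * 1) / (n.factorial : ℝ) := by
        gcongr
        exact fact_le_mul n
    _ = 2 * (n + 1) / n.factorial := by ring

lemma hsI0 : ∀ R : ℝ, 1 ≤ R → Summable (fun n => |cI0 n| * ((eI0 n : ℝ) + 1) * R ^ eI0 n) :=
  hs_of_bound _ _ hcI0 (fun n => by unfold eI0; omega)
lemma hsI1 : ∀ R : ℝ, 1 ≤ R → Summable (fun n => |cI1 n| * ((eI1 n : ℝ) + 1) * R ^ eI1 n) :=
  hs_of_bound _ _ hcI1 (fun n => by unfold eI1; omega)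
lemma hsS0 : ∀ R : ℝ, 1 ≤ R → Summable (fun n => |cS0 n| * ((eS0 n : ℝ) + 1) * R ^ eS0 n) :=
  hs_of_bound _ _ hcS0 (fun n => by unfold eS0; omega)
lemma hsS1 : ∀ R : ℝ, 1 ≤ R → Summable (fun n => |cS1 n| * ((eS1 n : ℝ) + 1) * R ^ eS1 n) :=
  hs_of_bound _ _ hcS1 (fun n => by unfold eS1; omega)

noncomputable def S0fun (z : ℝ) : ℝ :=
  ∑' n : ℕ, psiHarm (n + 1) / (Nat.factorial (n + 1) : ℝ) ^ 2 * (z / 2) ^ (2 * (n + 1))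
noncomputable def S1fun (z : ℝ) : ℝ :=
  ∑' n : ℕ, (psiHarm (n + 1) + psiHarm n) /
    ((Nat.factorial n : ℝ) * (Nat.factorial (n + 1) : ℝ)) * (z / 2) ^ (2 * n + 1)

lemma besselK0_eq (z : ℝ) : besselK0 z =
    -(Real.log (z / 2) + Real.eulerMascheroniConstant) * besselI0 z + S0fun z := rfl
lemma besselK1_eq (z : ℝ) : besselK1 z =
    1 / z + (Real.log (z / 2) + Real.eulerMascheroniConstant) * besselI1 z -
      (1 / 2) * S1fun z := rfl

lemma besselI0_eq (z : ℝ) : besselI0 z = ∑' n, cI0 n * z ^ eI0 n :=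
  tsum_congr fun n => by simp only [cI0, eI0]; rw [div_pow, one_div_pow]; ring
lemma besselI1_eq (z : ℝ) : besselI1 z = ∑' n, cI1 n * z ^ eI1 n :=
  tsum_congr fun n => by simp only [cI1, eI1]; rw [div_pow, one_div_pow]; ring
lemma S0fun_eq (z : ℝ) : S0fun z = ∑' n, cS0 n * z ^ eS0 n :=
  tsum_congr fun n => by simp only [cS0, eS0]; rw [div_pow, one_div_pow]; ring
lemma S1fun_eq (z : ℝ) : S1fun z = ∑' n, cS1 n * z ^ eS1 n :=
  tsum_congr fun n => by simp only [cS1, eS1]; rw [div_pow, one_div_pow]; ring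

noncomputable def D0fun (z : ℝ) : ℝ := ∑' n, cS0 n * ((eS0 n : ℝ)) * z ^ (eS0 n - 1)
noncomputable def D1fun (z : ℝ) : ℝ := ∑' n, cS1 n * ((eS1 n : ℝ)) * z ^ (eS1 n - 1)

lemma hasDerivAt_S0fun (z : ℝ) : HasDerivAt S0fun (D0fun z) z := by
  have h := hasDerivAt_cz cS0 eS0 hsS0 z
  rwa [show (fun z => ∑' n, cS0 n * z ^ eS0 n) = S0fun from
    funext fun z => (S0fun_eq z).symm] at h

lemma hasDerivAt_S1fun (z : ℝ) : HasDerivAt S1fun (D1fun z) z := by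
  have h := hasDerivAt_cz cS1 eS1 hsS1 z
  rwa [show (fun z => ∑' n, cS1 n * z ^ eS1 n) = S1fun from
    funext fun z => (S1fun_eq z).symm] at h

lemma hasDerivAt_besselI0 (z : ℝ) : HasDerivAt besselI0 (besselI1 z) z := by
  have h := hasDerivAt_cz cI0 eI0 hsI0 z
  rw [show (fun z => ∑' n, cI0 n * z ^ eI0 n) = besselI0 from
    funext fun z => (besselI0_eq z).symm] at h
  convert h using 1
  rw [Summable.tsum_eq_zero_add (summable_cz_deriv cI0 eI0 hsI0 z)]
  have h0 : cI0 0 * ((eI0 0 : ℕ) : ℝ) * z ^ (eI0 0 - 1) = 0 := by simp [cI0, eI0]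
  rw [h0, zero_add, besselI1]
  apply tsum_congr
  intro n
  simp only [cI0, eI0]
  rw [show 2 * (n + 1) - 1 = 2 * n + 1 by omega, div_pow, Nat.factorial_succ]
  have hf : ((n.factorial : ℝ)) ≠ 0 := by positivity
  simp only [one_div_pow]
  push_cast
  field_simp
  ring

lemma hasDerivAt_besselI1 (z : ℝ) (hz : z ≠ 0) :
    HasDerivAt besselI1 (besselI0 z - besselI1 z / z) z := by
  have h := hasDerivAt_cz cI1 eI1 hsI1 z
  rw [show (fun z => ∑' n, cI1 n * z ^ eI1 n) = besselI1 from
    funext fun z => (besselI1_eq z).symm] at h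
  convert h using 1
  rw [besselI0_eq z, besselI1_eq z, div_eq_mul_inv (∑' n, cI1 n * z ^ eI1 n),
    ← tsum_mul_right, ← Summable.tsum_sub (summable_cz cI0 eI0 hsI0 z)
      ((summable_cz cI1 eI1 hsI1 z).mul_right _)]
  apply tsum_congr
  intro n
  simp only [cI0, cI1, eI0, eI1]
  rw [show 2 * n + 1 - 1 = 2 * n by omega, Nat.factorial_succ]
  have hf : ((n.factorial : ℝ)) ≠ 0 := by positivity
  push_cast
  field_simp
  ring

lemma key0 (z : ℝ) (hz : z ≠ 0) :
    D0fun z = (besselI0 z - 1) / z + (1 / 2) * S1fun z := by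
  have h1 : besselI0 z - 1 = ∑' n, cI0 (n + 1) * z ^ eI0 (n + 1) := by
    rw [besselI0_eq z, Summable.tsum_eq_zero_add (summable_cz cI0 eI0 hsI0 z)]
    simp [cI0, eI0]
  have hs1 : Summable fun n => cI0 (n + 1) * z ^ eI0 (n + 1) :=
    (summable_cz cI0 eI0 hsI0 z).comp_injective (add_left_injective 1)
  rw [S1fun_eq, D0fun, h1, div_eq_mul_inv, ← tsum_mul_right, ← tsum_mul_left,
    ← Summable.tsum_add (hs1.mul_right _) ((summable_cz cS1 eS1 hsS1 z).mul_left _)]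
  apply tsum_congr
  intro n
  simp only [cI0, cS1, eI0, eS1, cS0, eS0]
  rw [show 2 * n + 2 - 1 = 2 * n + 1 by omega, Nat.factorial_succ, psiHarm_succ]
  have hf : ((n.factorial : ℝ)) ≠ 0 := by positivity
  push_cast
  field_simp
  ring

lemma key1 (z : ℝ) (hz : z ≠ 0) :
    (1 / z) * besselI1 z - (1 / 2) * D1fun z - (1 / (2 * z)) * S1fun z = -S0fun z := by
  have s1 : Summable fun n => (1 / z) * (cI1 n * z ^ eI1 n) :=
    (summable_cz cI1 eI1 hsI1 z).mul_left _
  have s2 : Summable fun n => (1 / 2) * (cS1 n * ((eS1 n : ℕ) : ℝ) * z ^ (eS1 n - 1)) :=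
    (summable_cz_deriv cS1 eS1 hsS1 z).mul_left _
  have s3 : Summable fun n => (1 / (2 * z)) * (cS1 n * z ^ eS1 n) :=
    (summable_cz cS1 eS1 hsS1 z).mul_left _
  rw [besselI1_eq, S1fun_eq, D1fun, ← tsum_mul_left, ← tsum_mul_left, ← tsum_mul_left,
    ← Summable.tsum_sub s1 s2, ← Summable.tsum_sub (s1.sub s2) s3]
  rw [Summable.tsum_eq_zero_add ((s1.sub s2).sub s3)]
  have h0 : (1 / z) * (cI1 0 * z ^ eI1 0) - (1 / 2) * (cS1 0 * ((eS1 0 : ℕ) : ℝ) * z ^ (eS1 0 - 1))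
      - (1 / (2 * z)) * (cS1 0 * z ^ eS1 0) = 0 := by
    simp only [cI1, cS1, eI1, eS1, psiHarm]
    norm_num
    field_simp
    ring
  rw [h0, zero_add, S0fun_eq, ← tsum_neg]
  apply tsum_congr
  intro n
  simp only [cI1, cS1, cS0, eI1, eS1, eS0, Nat.factorial_succ, psiHarm_succ]
  rw [show 2 * (n + 1) + 1 - 1 = 2 * (n + 1) by omega]
  have hf : ((n.factorial : ℝ)) ≠ 0 := by positivity
  push_cast
  field_simp
  ring

lemma hasDerivAt_logTerm (z : ℝ) (hz : 0 < z) :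
    HasDerivAt (fun z : ℝ => Real.log (z / 2) + Real.eulerMascheroniConstant) (1 / z) z := by
  have h1 : HasDerivAt (fun z : ℝ => z / 2) (1 / 2) z := by
    simpa using (hasDerivAt_id z).div_const 2
  have h2 := (Real.hasDerivAt_log (by positivity : z / 2 ≠ 0)).comp z h1
  have h3 := h2.add_const Real.eulerMascheroniConstant
  refine h3.congr_deriv (Eq.symm ?_)
  field_simp

lemma hasDerivAt_besselK0 (z : ℝ) (hz : 0 < z) :
    HasDerivAt besselK0 (-besselK1 z) z := by
  have hL := hasDerivAt_logTerm z hz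
  have h := ((hL.fun_neg.fun_mul (hasDerivAt_besselI0 z)).fun_add (hasDerivAt_S0fun z))
  rw [show (fun z => -(Real.log (z / 2) + Real.eulerMascheroniConstant) * besselI0 z + S0fun z)
      = besselK0 from funext fun z => (besselK0_eq z).symm] at h
  refine h.congr_deriv (Eq.symm ?_)
  rw [besselK1_eq, key0 z hz.ne']
  field_simp
  ring

lemma hasDerivAt_besselK1 (z : ℝ) (hz : 0 < z) :
    HasDerivAt besselK1 (-besselK0 z - besselK1 z / z) z := by
  have hL := hasDerivAt_logTerm z hz
  have hinv : HasDerivAt (fun z : ℝ => 1 / z) (-(1 / z ^ 2)) z := by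
    simpa [one_div] using hasDerivAt_inv hz.ne'
  have h := ((hinv.fun_add (hL.fun_mul (hasDerivAt_besselI1 z hz.ne'))).fun_sub
    ((hasDerivAt_S1fun z).const_mul (1 / 2)))
  rw [show (fun z => 1 / z + (Real.log (z / 2) + Real.eulerMascheroniConstant) * besselI1 z
      - 1 / 2 * S1fun z) = besselK1 from funext fun z => (besselK1_eq z).symm] at h
  refine h.congr_deriv (Eq.symm ?_)
  have hK := key1 z hz.ne'
  rw [besselK0_eq, besselK1_eq]
  linear_combination -hK

lemma sum_shift (m : ℕ) (f : ℕ → ℝ) (h0 : f 0 = 0) :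
    ∑ k ∈ Finset.range (m + 1), f k = ∑ k ∈ Finset.Icc 1 m, f k := by
  rw [Finset.sum_range_succ', h0, add_zero, ← Finset.Ico_add_one_right_eq_Icc, Finset.sum_Ico_eq_sum_range]
  simp [add_comm]

lemma mul_sum_pow (m : ℕ) (g : ℕ → ℝ) (r : ℝ) :
    r * ∑ k ∈ Finset.Icc 1 m, g k * r ^ (2 * k - 1) =
      ∑ k ∈ Finset.Icc 1 m, g k * r ^ (2 * k) := by
  rw [Finset.mul_sum]
  apply Finset.sum_congr rfl
  intro k hk
  have hk1 : 1 ≤ k := (Finset.mem_Icc.1 hk).1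
  have h : r ^ (2 * k) = r ^ (2 * k - 1) * r := by
    rw [← pow_succ]; congr 1; omega
  rw [h]; ring

section poly
variable (a : ℕ → ℕ → ℝ) (n : ℕ)

noncomputable def P1 (r : ℝ) : ℝ :=
  ∑ k ∈ Finset.Icc 1 (n / 2), (k : ℝ) * a n (2 * k) * r ^ (2 * k - 1)
noncomputable def Q1 (r : ℝ) : ℝ :=
  ∑ k ∈ Finset.range ((n - 1) / 2 + 1), (2 * k + 1 : ℝ) * a n (2 * k + 1) * r ^ (2 * k)
noncomputable def W2 (r : ℝ) : ℝ :=
  ∑ k ∈ Finset.Icc 1 ((n - 1) / 2), (k : ℝ) * a n (2 * k + 1) * r ^ (2 * k)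

lemma hasDerivAt_vPoly (r : ℝ) :
    HasDerivAt (vPoly a n) (2 * P1 a n r) r := by
  have h : HasDerivAt (vPoly a n)
      (∑ k ∈ Finset.range (n / 2 + 1), a n (2 * k) * (↑(2 * k) * r ^ (2 * k - 1))) r := by
    apply HasDerivAt.fun_sum
    intro k _
    exact (hasDerivAt_pow (2 * k) r).const_mul (a n (2 * k))
  convert h using 1
  rw [sum_shift (n / 2) (fun k => a n (2 * k) * (↑(2 * k) * r ^ (2 * k - 1))) (by simp),
    P1, Finset.mul_sum]
  apply Finset.sum_congr rfl
  intro k hk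
  push_cast
  ring

lemma hasDerivAt_wPoly (r : ℝ) :
    HasDerivAt (wPoly a n) (Q1 a n r) r := by
  have h : HasDerivAt (wPoly a n)
      (∑ k ∈ Finset.range ((n - 1) / 2 + 1),
        a n (2 * k + 1) * (↑(2 * k + 1) * r ^ (2 * k + 1 - 1))) r := by
    apply HasDerivAt.fun_sum
    intro k _
    exact (hasDerivAt_pow (2 * k + 1) r).const_mul (a n (2 * k + 1))
  convert h using 1
  rw [Q1]
  apply Finset.sum_congr rfl
  intro k hk
  rw [show 2 * k + 1 - 1 = 2 * k by omega]
  push_cast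
  ring

lemma hasDerivAt_P1 (r : ℝ) :
    HasDerivAt (P1 a n)
      (∑ k ∈ Finset.Icc 1 (n / 2), (k : ℝ) * (2 * k - 1 : ℝ) * a n (2 * k) * r ^ (2 * k - 2))
      r := by
  have h : HasDerivAt (P1 a n)
      (∑ k ∈ Finset.Icc 1 (n / 2),
        ((k : ℝ) * a n (2 * k)) * (↑(2 * k - 1) * r ^ (2 * k - 1 - 1))) r := by
    apply HasDerivAt.fun_sum
    intro k _
    exact (hasDerivAt_pow (2 * k - 1) r).const_mul ((k : ℝ) * a n (2 * k))
  convert h using 1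
  apply Finset.sum_congr rfl
  intro k hk
  have hk1 : 1 ≤ k := (Finset.mem_Icc.1 hk).1
  rw [show 2 * k - 1 - 1 = 2 * k - 2 by omega, Nat.cast_sub (by omega : 1 ≤ 2 * k)]
  push_cast
  ring

lemma hasDerivAt_W2 (r : ℝ) :
    HasDerivAt (W2 a n)
      (∑ k ∈ Finset.Icc 1 ((n - 1) / 2), 2 * (k : ℝ) ^ 2 * a n (2 * k + 1) * r ^ (2 * k - 1))
      r := by
  have h : HasDerivAt (W2 a n)
      (∑ k ∈ Finset.Icc 1 ((n - 1) / 2),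
        ((k : ℝ) * a n (2 * k + 1)) * (↑(2 * k) * r ^ (2 * k - 1))) r := by
    apply HasDerivAt.fun_sum
    intro k _
    exact (hasDerivAt_pow (2 * k) r).const_mul ((k : ℝ) * a n (2 * k + 1))
  convert h using 1
  apply Finset.sum_congr rfl
  intro k hk
  push_cast
  ring

lemma vTilde_eq (γ : ℝ) (r : ℝ) :
    vTilde γ a n r = 2 * P1 a n r - γ * wPoly a n r := rfl

lemma wTilde_eq (γ : ℝ) (r : ℝ) :
    wTilde γ a n r = 2 * W2 a n r - γ * vPoly a n r := rfl

lemma hasDerivAt_vTilde (γ : ℝ) (r : ℝ) :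
    HasDerivAt (vTilde γ a n)
      (2 * (∑ k ∈ Finset.Icc 1 (n / 2),
          (k : ℝ) * (2 * k - 1 : ℝ) * a n (2 * k) * r ^ (2 * k - 2)) -
        γ * Q1 a n r) r := by
  have h := ((hasDerivAt_P1 a n r).const_mul 2).fun_sub ((hasDerivAt_wPoly a n r).const_mul γ)
  exact h

lemma hasDerivAt_wTilde (γ : ℝ) (r : ℝ) :
    HasDerivAt (wTilde γ a n)
      (2 * (∑ k ∈ Finset.Icc 1 ((n - 1) / 2),
          2 * (k : ℝ) ^ 2 * a n (2 * k + 1) * r ^ (2 * k - 1)) -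
        γ * (2 * P1 a n r)) r := by
  have h := ((hasDerivAt_W2 a n r).const_mul 2).fun_sub ((hasDerivAt_vPoly a n r).const_mul γ)
  exact h

lemma Q1_sub (r : ℝ) (hr : r ≠ 0) :
    Q1 a n r = 2 * W2 a n r + wPoly a n r / r := by
  rw [Q1, wPoly, W2, div_eq_mul_inv, Finset.sum_mul, Finset.mul_sum,
    ← sum_shift ((n - 1) / 2) (fun k => 2 * ((k : ℝ) * a n (2 * k + 1) * r ^ (2 * k))) (by simp),
    ← Finset.sum_add_distrib]
  apply Finset.sum_congr rfl
  intro k hk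
  rw [pow_succ]
  field_simp

end poly

section phi
variable (a : ℕ → ℕ → ℝ) (n : ℕ) (γ : ℝ)

lemma hasDerivAt_K0comp (hγ : 0 < γ) (r : ℝ) (hr : 0 < r) :
    HasDerivAt (fun x => besselK0 (γ * x)) (-besselK1 (γ * r) * γ) r := by
  have hc : HasDerivAt (fun x : ℝ => γ * x) γ r := by
    simpa using (hasDerivAt_id r).const_mul γ
  exact (hasDerivAt_besselK0 (γ * r) (by positivity)).comp r hc

lemma hasDerivAt_K1comp (hγ : 0 < γ) (r : ℝ) (hr : 0 < r) :
    HasDerivAt (fun x => besselK1 (γ * x))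
      ((-besselK0 (γ * r) - besselK1 (γ * r) / (γ * r)) * γ) r := by
  have hc : HasDerivAt (fun x : ℝ => γ * x) γ r := by
    simpa using (hasDerivAt_id r).const_mul γ
  exact (hasDerivAt_besselK1 (γ * r) (by positivity)).comp r hc

lemma hasDerivAt_PhiFund (hγ : 0 < γ) (r : ℝ) (hr : 0 < r) :
    HasDerivAt (PhiFund γ a n)
      (besselK0 (γ * r) * vTilde γ a n r + besselK1 (γ * r) * wTilde γ a n r) r := by
  have h := ((hasDerivAt_K0comp γ hγ r hr).fun_mul (hasDerivAt_vPoly a n r)).fun_add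
    ((hasDerivAt_K1comp γ hγ r hr).fun_mul (hasDerivAt_wPoly a n r))
  have hfun : (fun x => besselK0 (γ * x) * vPoly a n x + besselK1 (γ * x) * wPoly a n x)
      = PhiFund γ a n := rfl
  rw [hfun] at h
  refine h.congr_deriv (Eq.symm ?_)
  rw [vTilde_eq, wTilde_eq, Q1_sub a n r hr.ne']
  field_simp
  ring

lemma hasDerivAt_PhiD1 (hγ : 0 < γ) (r : ℝ) (hr : 0 < r) :
    HasDerivAt (fun x => besselK0 (γ * x) * vTilde γ a n x + besselK1 (γ * x) * wTilde γ a n x)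
      (besselK0 (γ * r) * vBar γ a n r + besselK1 (γ * r) / r * wBar γ a n r) r := by
  have h := ((hasDerivAt_K0comp γ hγ r hr).fun_mul (hasDerivAt_vTilde a n γ r)).fun_add
    ((hasDerivAt_K1comp γ hγ r hr).fun_mul (hasDerivAt_wTilde a n γ r))
  refine h.congr_deriv (Eq.symm ?_)
  have hB : r * (∑ k ∈ Finset.Icc 1 ((n - 1) / 2),
        2 * (k : ℝ) ^ 2 * a n (2 * k + 1) * r ^ (2 * k - 1))
      = 2 * ∑ k ∈ Finset.Icc 1 ((n - 1) / 2), (k : ℝ) ^ 2 * a n (2 * k + 1) * r ^ (2 * k) := by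
    rw [mul_sum_pow ((n - 1) / 2) (fun k => 2 * (k : ℝ) ^ 2 * a n (2 * k + 1)) r,
      Finset.mul_sum]
    apply Finset.sum_congr rfl
    intro k hk
    ring
  have hC : r * P1 a n r = ∑ k ∈ Finset.Icc 1 (n / 2), (k : ℝ) * a n (2 * k) * r ^ (2 * k) := by
    rw [P1, mul_sum_pow (n / 2) (fun k => (k : ℝ) * a n (2 * k)) r]
  simp only [vBar, wBar, Q1]
  rw [show (∑ k ∈ Finset.Icc 1 ((n - 1) / 2), (k : ℝ) ^ 2 * a n (2 * k + 1) * r ^ (2 * k))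
      = r * (∑ k ∈ Finset.Icc 1 ((n - 1) / 2),
        2 * (k : ℝ) ^ 2 * a n (2 * k + 1) * r ^ (2 * k - 1)) / 2 from by rw [hB]; ring,
    show (∑ k ∈ Finset.Icc 1 (n / 2), (k : ℝ) * a n (2 * k) * r ^ (2 * k))
      = r * P1 a n r from hC.symm]
  rw [P1]
  field_simp
  ring

end phi

end aux

/-- For every `n ≥ 0`, `Φ_n` is twice differentiable on `(0,∞)` and
`Φ_n″(r) = K₀(γr) v̄_n(r) + (K₁(γr)/r) w̄_n(r)` for all `r > 0`. -/
theorem stmt_14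
    (κ c : ℝ) (hκ : 0 < κ) (hc : 0 < c) (a : ℕ → ℕ → ℝ)
    (ha0 : ∀ n : ℕ, a n 0 = 1)
    (hann : ∀ n : ℕ, 1 ≤ n →
      a n n = -(betaC κ c 1 * a (n - 1) (n - 1)) / (2 * gammaC κ c * n))
    (hrec : ∀ n k : ℕ, 1 ≤ k → k ≤ n - 1 →
      a n k = (1 / (2 * gammaC κ c * k)) *
        (4 * (((k + 1) / 2 : ℕ) : ℝ) ^ 2 * a n (k + 1) -
          ∑ m ∈ Finset.Icc (k - 1) (n - 1), betaC κ c (n - m) * a m (k - 1)))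
    (hzero : ∀ n k : ℕ, n < k → a n k = 0)
    (n : ℕ) :
    (∀ r : ℝ, 0 < r → DifferentiableAt ℝ (PhiFund (gammaC κ c) a n) r) ∧
      ∀ r : ℝ, 0 < r →
        HasDerivAt (deriv (PhiFund (gammaC κ c) a n))
          (besselK0 (gammaC κ c * r) * vBar (gammaC κ c) a n r +
            besselK1 (gammaC κ c * r) / r * wBar (gammaC κ c) a n r) r := by
  have hγ : 0 < gammaC κ c := div_pos hκ hc
  constructor
  · intro r hr
    exact (hasDerivAt_PhiFund a n (gammaC κ c) hγ r hr).differentiableAt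
  · intro r hr
    have hev : deriv (PhiFund (gammaC κ c) a n) =ᶠ[nhds r]
        (fun x => besselK0 (gammaC κ c * x) * vTilde (gammaC κ c) a n x +
          besselK1 (gammaC κ c * x) * wTilde (gammaC κ c) a n x) :=
      Filter.eventuallyEq_of_mem (Ioi_mem_nhds hr)
        (fun x hx => (hasDerivAt_PhiFund a n (gammaC κ c) hγ x hx).deriv)
    exact (hasDerivAt_PhiD1 a n (gammaC κ c) hγ r hr).congr_of_eventuallyEq hev
end
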